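/- Let F be a field of characteristic 2 and L/F an extension of degree 4 with a² ∈ F for all a ∈ L. The L-algebra L ⊗_F L is a local ring whose unique maximal ideal is Π = ker π, where π : L ⊗_F L → L is the multiplication map; moreover, an element g ∈ L ⊗_F L is invertible if and only if π(g) ≠ 0, and in that case g⁻¹ = π(g)⁻² · g. -/

import Mathlib

open TensorProduct

theorem stmt4 (F L : Type*) [Field F] [Field L] [Algebra F L] [CharP F 2]
    (hdim : Module.finrank F L = 4)
    (hsq : ∀ a : L, ∃ f : F, algebraMap F L f = a ^ 2) (π : (L ⊗[F] L) →ₐ[L] L) (hπ : ∀ x y : L, π (x ⊗ₜ[F] y) = x * y) :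
    IsLocalRing (L ⊗[F] L) ∧
    (RingHom.ker π).IsMaximal ∧
    (∀ I : Ideal (L ⊗[F] L), I.IsMaximal → I = RingHom.ker π) ∧
    (∀ g : L ⊗[F] L, IsUnit g ↔ π g ≠ 0) ∧
    (∀ g : L ⊗[F] L, π g ≠ 0 → g * ((π g ^ 2)⁻¹ • g) = 1) := by
  haveI : CharP L 2 := charP_of_injective_algebraMap (algebraMap F L).injective 2
  haveI : CharP (L ⊗[F] L) 2 := by
    have hinj : Function.Injective (algebraMap L (L ⊗[F] L)) := by
      intro a b hab
      have h := congrArg π hab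
      simpa [hπ] using h
    exact charP_of_injective_algebraMap hinj 2
  have hamap : ∀ c : L, algebraMap L (L ⊗[F] L) c = c ⊗ₜ[F] 1 := fun c => rfl
  -- key identity: g ^ 2 = algebraMap (π g ^ 2)
  have key : ∀ g : L ⊗[F] L, g ^ 2 = algebraMap L (L ⊗[F] L) (π g ^ 2) := by
    intro g
    induction g using TensorProduct.induction_on with
    | zero => simp
    | tmul x y =>
        obtain ⟨f, hf⟩ := hsq y
        have h1 : (x ⊗ₜ[F] y) ^ 2 = (x ^ 2) ⊗ₜ[F] (y ^ 2) := by
          simp [pow_two, Algebra.TensorProduct.tmul_mul_tmul]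
        have h2 : (π (x ⊗ₜ[F] y)) ^ 2 = x ^ 2 * y ^ 2 := by
          rw [hπ]; ring
        rw [h1, h2, hamap, ← hf, Algebra.algebraMap_eq_smul_one, TensorProduct.tmul_smul,
          TensorProduct.smul_tmul', Algebra.smul_def, hf, mul_comm]
        rw [Algebra.smul_def, mul_one, hf]
    | add a b ha hb =>
        haveI : Fact (Nat.Prime 2) := ⟨Nat.prime_two⟩
        rw [map_add, add_pow_char, add_pow_char, ha, hb, map_add]
  -- surjectivity of π
  have hsurj : Function.Surjective π := fun c => ⟨c ⊗ₜ[F] 1, by rw [hπ, mul_one]⟩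
  -- inverse formula
  have hinv : ∀ g : L ⊗[F] L, π g ≠ 0 → g * ((π g ^ 2)⁻¹ • g) = 1 := by
    intro g hg
    have : g * g = algebraMap L (L ⊗[F] L) (π g ^ 2) := by rw [← pow_two, key]
    rw [Algebra.smul_def, mul_comm (algebraMap L (L ⊗[F] L) ((π g ^ 2)⁻¹)) g, ← mul_assoc, this,
      ← map_mul, mul_inv_cancel₀ (pow_ne_zero 2 hg), map_one]
  -- unit characterization
  have hunit : ∀ g : L ⊗[F] L, IsUnit g ↔ π g ≠ 0 := by
    intro g
    constructor
    · intro h hg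
      have := h.map π
      rw [hg] at this
      exact not_isUnit_zero this
    · intro hg
      exact IsUnit.of_mul_eq_one _ (hinv g hg)
  haveI : Nontrivial (L ⊗[F] L) := by
    refine ⟨1, 0, fun h => ?_⟩
    have := congrArg π h
    simp at this
  have hloc : IsLocalRing (L ⊗[F] L) := by
    apply IsLocalRing.of_nonunits_add
    intro a b ha hb
    rw [mem_nonunits_iff, hunit, not_not] at ha hb ⊢
    rw [map_add, ha, hb, add_zero]
  have hker : (RingHom.ker π).IsMaximal := RingHom.ker_isMaximal_of_surjective _ hsurj
  refine ⟨hloc, hker, ?_, hunit, hinv⟩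
  intro I hI
  haveI := hloc
  rw [IsLocalRing.eq_maximalIdeal hI, IsLocalRing.eq_maximalIdeal hker]
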